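/- Let π : Lit_A → ℕ[X,X̄] be a model-compatible interpretation and let φ be a first-order sentence over 𝒱. Then φ is Mod_π-valid (i.e., 𝔄 ⊨ φ for every structure 𝔄 with universe A compatible with π) if and only if π⟦¬φ⟧ = 0. -/

import Mathlib

/-- A finite relational vocabulary: a type of relation symbols with arities. -/
structure Vocab : Type 1 where
  Rel : Type
  arity : Rel → ℕ

/-- First-order formulas over a relational vocabulary `𝒱` (with equality),
with variables from `Vars`.  Negated atoms are included as primitive literals. -/
inductive Formula (𝒱 : Vocab) (Vars : Type) : Type where
  | rel    : (R : 𝒱.Rel) → (Fin (𝒱.arity R) → Vars) → Formula 𝒱 Vars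
  | nrel   : (R : 𝒱.Rel) → (Fin (𝒱.arity R) → Vars) → Formula 𝒱 Vars
  | equal  : Vars → Vars → Formula 𝒱 Vars
  | nequal : Vars → Vars → Formula 𝒱 Vars
  | and    : Formula 𝒱 Vars → Formula 𝒱 Vars → Formula 𝒱 Vars
  | or     : Formula 𝒱 Vars → Formula 𝒱 Vars → Formula 𝒱 Vars
  | all    : Vars → Formula 𝒱 Vars → Formula 𝒱 Vars
  | ex     : Vars → Formula 𝒱 Vars → Formula 𝒱 Vars
  | not    : Formula 𝒱 Vars → Formula 𝒱 Vars

/-- A ground literal over vocabulary `𝒱` and universe `A`: a positive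
(`pos = true`) or negated (`pos = false`) ground atom `R(ā)`. -/
structure Lit (𝒱 : Vocab) (A : Type) where
  pos : Bool
  R : 𝒱.Rel
  args : Fin (𝒱.arity R) → A

/-- Negation of a literal (the negation of a literal is again a literal). -/
def Lit.neg {𝒱 : Vocab} {A : Type} (L : Lit 𝒱 A) : Lit 𝒱 A := ⟨!L.pos, L.R, L.args⟩

namespace Formula

variable {𝒱 : Vocab} {Vars : Type}

/-- Size of a formula (used for termination of the semiring semantics). -/
def size : Formula 𝒱 Vars → ℕ
  | rel _ _ => 1
  | nrel _ _ => 1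
  | equal _ _ => 1
  | nequal _ _ => 1
  | and φ ψ => φ.size + ψ.size + 1
  | or φ ψ => φ.size + ψ.size + 1
  | all _ φ => φ.size + 1
  | ex _ φ => φ.size + 1
  | not φ => φ.size + 1

mutual
/-- Negation normal form of a formula. -/
def nnf : Formula 𝒱 Vars → Formula 𝒱 Vars
  | rel R v => rel R v
  | nrel R v => nrel R v
  | equal x y => equal x y
  | nequal x y => nequal x y
  | and φ ψ => and φ.nnf ψ.nnf
  | or φ ψ => or φ.nnf ψ.nnf
  | all x φ => all x φ.nnf
  | ex x φ => ex x φ.nnf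
  | not φ => nnfNeg φ

/-- Negation normal form of the negation of a formula: `nnfNeg φ = nnf (¬φ)`. -/
def nnfNeg : Formula 𝒱 Vars → Formula 𝒱 Vars
  | rel R v => nrel R v
  | nrel R v => rel R v
  | equal x y => nequal x y
  | nequal x y => equal x y
  | and φ ψ => or (nnfNeg φ) (nnfNeg ψ)
  | or φ ψ => and (nnfNeg φ) (nnfNeg ψ)
  | all x φ => ex x (nnfNeg φ)
  | ex x φ => all x (nnfNeg φ)
  | not φ => nnf φ
end

theorem size_nnf_le (φ : Formula 𝒱 Vars) : φ.nnf.size ≤ φ.size ∧ (nnfNeg φ).size ≤ φ.size := by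
  induction φ <;> simp_all [nnf, nnfNeg, size] <;> omega

/-- Free variables of a formula. -/
def FV [DecidableEq Vars] : Formula 𝒱 Vars → Finset Vars
  | rel _ v => Finset.image v Finset.univ
  | nrel _ v => Finset.image v Finset.univ
  | equal x y => {x, y}
  | nequal x y => {x, y}
  | and φ ψ => φ.FV ∪ ψ.FV
  | or φ ψ => φ.FV ∪ ψ.FV
  | all x φ => φ.FV.erase x
  | ex x φ => φ.FV.erase x
  | not φ => φ.FV

end Formula

section Semantics

variable {𝒱 : Vocab} {Vars A K : Type} [DecidableEq Vars] [Fintype A] [DecidableEq A]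
  [CommSemiring K]

/-- The extension of a `K`-interpretation `π : Lit 𝒱 A → K` to first-order formulas,
relative to a valuation `ν : Vars → A`:  `eval π φ ν = π⟦φ⟧ν`. -/
def eval (π : Lit 𝒱 A → K) : Formula 𝒱 Vars → (Vars → A) → K
  | .rel R v, ν => π ⟨true, R, fun i => ν (v i)⟩
  | .nrel R v, ν => π ⟨false, R, fun i => ν (v i)⟩
  | .equal x y, ν => if ν x = ν y then 1 else 0
  | .nequal x y, ν => if ν x ≠ ν y then 1 else 0
  | .and φ ψ, ν => eval π φ ν * eval π ψ ν
  | .or φ ψ, ν => eval π φ ν + eval π ψ ν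
  | .all x φ, ν => ∏ a : A, eval π φ (Function.update ν x a)
  | .ex x φ, ν => ∑ a : A, eval π φ (Function.update ν x a)
  | .not φ, ν => eval π (Formula.nnfNeg φ) ν
termination_by φ _ => φ.size
decreasing_by
  all_goals simp [Formula.size]
  all_goals first
    | omega
    | exact Nat.lt_succ_of_le (Formula.size_nnf_le _).2
    | exact (Formula.size_nnf_le _).2

end Semantics

/-- A `𝒱`-structure with universe `A`: an interpretation of each relation symbol. -/
def Struc (𝒱 : Vocab) (A : Type) := (R : 𝒱.Rel) → (Fin (𝒱.arity R) → A) → Prop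

/-- Standard (Tarski) satisfaction of a literal in a structure. -/
def Struc.SatLit {𝒱 : Vocab} {A : Type} (𝔄 : Struc 𝒱 A) (L : Lit 𝒱 A) : Prop :=
  if L.pos then 𝔄 L.R L.args else ¬ 𝔄 L.R L.args

section Sat

variable {𝒱 : Vocab} {Vars A : Type} [DecidableEq Vars]

/-- Standard (Tarski) satisfaction relation `𝔄 ⊨ φ[ν]`. -/
def Sat (𝔄 : Struc 𝒱 A) : Formula 𝒱 Vars → (Vars → A) → Prop
  | .rel R v, ν => 𝔄 R (fun i => ν (v i))
  | .nrel R v, ν => ¬ 𝔄 R (fun i => ν (v i))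
  | .equal x y, ν => ν x = ν y
  | .nequal x y, ν => ν x ≠ ν y
  | .and φ ψ, ν => Sat 𝔄 φ ν ∧ Sat 𝔄 ψ ν
  | .or φ ψ, ν => Sat 𝔄 φ ν ∨ Sat 𝔄 ψ ν
  | .all x φ, ν => ∀ a : A, Sat 𝔄 φ (Function.update ν x a)
  | .ex x φ, ν => ∃ a : A, Sat 𝔄 φ (Function.update ν x a)
  | .not φ, ν => ¬ Sat 𝔄 φ ν

end Sat

section ModelDefining

variable {𝒱 : Vocab} {A K : Type} [CommSemiring K]

/-- A `K`-interpretation is model-defining if for each fact exactly one of the values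
assigned to it and to its negation is `0`. -/
def ModelDefining (π : Lit 𝒱 A → K) : Prop :=
  ∀ L : Lit 𝒱 A, (π L = 0 ∧ π L.neg ≠ 0) ∨ (π L ≠ 0 ∧ π L.neg = 0)

/-- The structure `𝔄_π` defined by a model-defining interpretation `π`:
it satisfies a literal `L` iff `π L ≠ 0`. -/
def StrucOf (π : Lit 𝒱 A → K) : Struc 𝒱 A := fun R a => π ⟨true, R, a⟩ ≠ 0

end ModelDefining

/-- A commutative semiring is positive if it is `+`-positive and has no divisors of zero. -/
def IsPositive (K : Type) [CommSemiring K] : Prop :=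
  (∀ a b : K, a + b = 0 → a = 0 ∧ b = 0) ∧ ∀ a b : K, a * b = 0 → a = 0 ∨ b = 0


open MvPolynomial

/-- Generating relation for the dual-indeterminate congruence: `p · p̄ = 0` for `p ∈ X`
(we realize the set of tokens `X ∪ X̄` as the sum type `X ⊕ X`, with `Sum.inl p = p`
and `Sum.inr p = p̄`). -/
def pairRel (X : Type) : MvPolynomial (X ⊕ X) ℕ → MvPolynomial (X ⊕ X) ℕ → Prop :=
  fun a b => b = 0 ∧ ∃ p : X, a = MvPolynomial.X (Sum.inl p) * MvPolynomial.X (Sum.inr p)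

/-- The semiring congruence on `ℕ[X ∪ X̄]` generated by `p · p̄ = 0` for all `p ∈ X`. -/
noncomputable def dualCon (X : Type) : RingCon (MvPolynomial (X ⊕ X) ℕ) := ringConGen (pairRel X)

/-- `ℕ[X,X̄]`: the commutative semiring of dual-indeterminate polynomials, i.e. the
quotient of the polynomial semiring `ℕ[X ∪ X̄]` by the congruence `p · p̄ = 0`. -/
abbrev DualPoly (X : Type) := (dualCon X).Quotient

/-- The image in `ℕ[X,X̄]` of a provenance token `x ∈ X ∪ X̄`. -/
noncomputable def tok {X : Type} (x : X ⊕ X) : DualPoly X :=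
  ((MvPolynomial.X x : MvPolynomial (X ⊕ X) ℕ) : DualPoly X)

open Classical in
/-- Deleting from a polynomial all monomials that contain a pair of complementary tokens. -/
noncomputable def clean {X : Type} (q : MvPolynomial (X ⊕ X) ℕ) : MvPolynomial (X ⊕ X) ℕ :=
  ∑ m ∈ q.support.filter
      (fun m => ¬ ∃ p : X, m (Sum.inl p) ≠ 0 ∧ m (Sum.inr p) ≠ 0),
    MvPolynomial.monomial m (q.coeff m)

/-- A representative polynomial of an element of `ℕ[X,X̄]`. -/
noncomputable def qrep {X : Type} (q : DualPoly X) : MvPolynomial (X ⊕ X) ℕ :=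
  (Quot.exists_rep q).choose

/-- The coefficient of the monomial `m` in a dual-indeterminate polynomial:
the coefficient of `m` in the canonical (clean) representative. -/
noncomputable def coeffQ {X : Type} (q : DualPoly X) (m : (X ⊕ X) →₀ ℕ) : ℕ :=
  (clean (qrep q)).coeff m

/-- The sum of the monomial coefficients of a dual-indeterminate polynomial. -/
noncomputable def sumCoeff {X : Type} (q : DualPoly X) : ℕ :=
  ∑ m ∈ (clean (qrep q)).support, (clean (qrep q)).coeff m


section DualInterp

variable {𝒱 : Vocab} {A X : Type}

/-- A provenance-tracking interpretation: positive facts are annotated with positive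
tokens (or `0`, `1`), negative facts with negative tokens (or `0`, `1`), with the
convention that the complementary token `p̄` may only annotate the negation of the
fact annotated by `p` (and vice versa). -/
def ProvTracking (π : Lit 𝒱 A → DualPoly X) : Prop :=
  (∀ L : Lit 𝒱 A, L.pos = true → π L = 0 ∨ π L = 1 ∨ ∃ p : X, π L = tok (Sum.inl p)) ∧
  (∀ L : Lit 𝒱 A, L.pos = false → π L = 0 ∨ π L = 1 ∨ ∃ p : X, π L = tok (Sum.inr p)) ∧
  (∀ L L' : Lit 𝒱 A, ∀ p : X,
     π L = tok (Sum.inl p) → π L' = tok (Sum.inr p) → L' = L.neg)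

/-- A model-compatible interpretation: each fact is either tracked by a pair of
complementary tokens `z`, `z̄` (a distinct pair for each tracked fact), or is
annotated by `0` and `1` (untracked false fact) or by `1` and `0` (untracked true
fact). -/
def ModelCompatible (π : Lit 𝒱 A → DualPoly X) : Prop :=
  (∀ L : Lit 𝒱 A, L.pos = true →
      (∃ z : X, π L = tok (Sum.inl z) ∧ π L.neg = tok (Sum.inr z)) ∨
      (π L = 0 ∧ π L.neg = 1) ∨ (π L = 1 ∧ π L.neg = 0)) ∧
  (∀ L L' : Lit 𝒱 A, ∀ z : X, π L = tok (Sum.inl z) → π L' = tok (Sum.inl z) → L = L')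

/-- A structure `𝔄` (with the same universe `A`) is compatible with `π` if `𝔄 ⊨ L`
for every literal `L` with `π L = 1`. -/
def Compatible (π : Lit 𝒱 A → DualPoly X) (𝔄 : Struc 𝒱 A) : Prop :=
  ∀ L : Lit 𝒱 A, π L = 1 → 𝔄.SatLit L

open Classical in
/-- The specialization `π↓𝔄` of an interpretation `π` with respect to a structure `𝔄`:
`π↓𝔄(L) = π(L)` if `𝔄 ⊨ L` and `π↓𝔄(L) = 0` otherwise. -/
noncomputable def specialize {K : Type} [CommSemiring K] (π : Lit 𝒱 A → K)
    (𝔄 : Struc 𝒱 A) : Lit 𝒱 A → K :=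
  fun L => if 𝔄.SatLit L then π L else 0

end DualInterp


section DP
variable {X : Type}
open MvPolynomial

lemma pair_eval_respects (v : X ⊕ X → ℕ) (hv : ∀ p : X, v (Sum.inl p) * v (Sum.inr p) = 0)
    {a b : MvPolynomial (X ⊕ X) ℕ} (h : dualCon X a b) :
    MvPolynomial.eval v a = MvPolynomial.eval v b := by
  have h' : RingConGen.Rel (pairRel X) a b := h
  clear h
  induction h' with
  | of x y hxy => obtain ⟨rfl, p, rfl⟩ := hxy; simp [hv]
  | refl x => rfl
  | symm _ ih => exact ih.symm
  | trans _ _ ih₁ ih₂ => exact ih₁.trans ih₂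
  | add _ _ ih₁ ih₂ => simp only [map_add, ih₁, ih₂]
  | mul _ _ ih₁ ih₂ => simp only [map_mul, ih₁, ih₂]

noncomputable def liftEval (v : X ⊕ X → ℕ) (hv : ∀ p : X, v (Sum.inl p) * v (Sum.inr p) = 0) :
    DualPoly X →+* ℕ where
  toFun := Quotient.lift (MvPolynomial.eval v) fun a b h => pair_eval_respects v hv h
  map_zero' := by change MvPolynomial.eval v 0 = 0; simp
  map_one' := by change MvPolynomial.eval v 1 = 1; simp
  map_add' := fun a b => Quotient.inductionOn₂ a b fun x y => by
    change MvPolynomial.eval v (x + y) = MvPolynomial.eval v x + MvPolynomial.eval v y; simp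
  map_mul' := fun a b => Quotient.inductionOn₂ a b fun x y => by
    change MvPolynomial.eval v (x * y) = MvPolynomial.eval v x * MvPolynomial.eval v y; simp

lemma liftEval_coe (v : X ⊕ X → ℕ) (hv : ∀ p : X, v (Sum.inl p) * v (Sum.inr p) = 0)
    (r : MvPolynomial (X ⊕ X) ℕ) : liftEval v hv (r : DualPoly X) = MvPolynomial.eval v r := rfl

def vS (s : X → Bool) : X ⊕ X → ℕ
  | Sum.inl p => if s p then 1 else 0
  | Sum.inr p => if s p then 0 else 1

lemma vS_pair (s : X → Bool) : ∀ p : X, vS s (Sum.inl p) * vS s (Sum.inr p) = 0 := by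
  intro p; by_cases h : s p <;> simp [vS, h]

noncomputable def evalS (s : X → Bool) : DualPoly X →+* ℕ := liftEval (vS s) (vS_pair s)

lemma evalS_coe (s : X → Bool) (r : MvPolynomial (X ⊕ X) ℕ) :
    evalS s (r : DualPoly X) = MvPolynomial.eval (vS s) r := rfl

lemma evalS_tok (s : X → Bool) (x : X ⊕ X) : evalS s (tok x) = vS s x := by
  rw [tok, evalS_coe, MvPolynomial.eval_X]

lemma tok_ne_zero (x : X ⊕ X) : tok x ≠ (0 : DualPoly X) := by
  intro h
  rcases x with p | p
  · have := congrArg (evalS (fun _ => true)) h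
    rw [evalS_tok, map_zero] at this; simp [vS] at this
  · have := congrArg (evalS (fun _ => false)) h
    rw [evalS_tok, map_zero] at this; simp [vS] at this

lemma tok_ne_one (x : X ⊕ X) : tok x ≠ (1 : DualPoly X) := by
  intro h
  rcases x with p | p
  · have := congrArg (evalS (fun _ => false)) h
    rw [evalS_tok, map_one] at this; simp [vS] at this
  · have := congrArg (evalS (fun _ => true)) h
    rw [evalS_tok, map_one] at this; simp [vS] at this

lemma dp_zero_ne_one : (0 : DualPoly X) ≠ 1 := by
  intro h
  have := congrArg (evalS (fun _ => true)) h
  rw [map_zero, map_one] at this; simp at this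

open Classical in
lemma tok_inl_inj {z p : X} (h : tok (Sum.inl z) = (tok (Sum.inl p) : DualPoly X)) : z = p := by
  by_contra hzp
  have := congrArg (evalS (fun a => if a = z then true else false)) h
  rw [evalS_tok, evalS_tok] at this
  simp [vS, Ne.symm hzp] at this

open Classical in
lemma tok_inl_ne_inr (z p : X) : (tok (Sum.inl z) : DualPoly X) ≠ tok (Sum.inr p) := by
  intro h
  have := congrArg (evalS (fun _ => true)) h
  rw [evalS_tok, evalS_tok] at this
  simp [vS] at this

lemma dirty_monomial_con_zero (m : (X ⊕ X) →₀ ℕ) (c : ℕ)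
    (p : X) (h1 : m (Sum.inl p) ≠ 0) (h2 : m (Sum.inr p) ≠ 0) :
    dualCon X (MvPolynomial.monomial m c) 0 := by
  set m' : (X ⊕ X) →₀ ℕ :=
    m - (Finsupp.single (Sum.inl p) 1 + Finsupp.single (Sum.inr p) 1) with hm'
  have hm : (Finsupp.single (Sum.inl p) 1 + Finsupp.single (Sum.inr p) 1) + m' = m := by
    classical
    ext x
    rcases x with q | q <;> by_cases hq : p = q <;> (try subst hq) <;>
      simp [hm', Finsupp.single_apply, *] <;> omega
  have key : (MvPolynomial.monomial m c : MvPolynomial (X ⊕ X) ℕ) =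
      (MvPolynomial.X (Sum.inl p) * MvPolynomial.X (Sum.inr p)) * MvPolynomial.monomial m' c := by
    rw [MvPolynomial.X, MvPolynomial.X, MvPolynomial.monomial_mul, MvPolynomial.monomial_mul,
      one_mul, one_mul, hm]
  have hgen : dualCon X (MvPolynomial.X (Sum.inl p) * MvPolynomial.X (Sum.inr p)) 0 :=
    RingConGen.Rel.of _ _ ⟨rfl, p, rfl⟩
  have := (dualCon X).mul hgen ((dualCon X).refl (MvPolynomial.monomial m' c))
  rw [zero_mul] at this
  rw [key]; exact this

lemma dirty_con_zero (r : MvPolynomial (X ⊕ X) ℕ)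
    (hr : ∀ m ∈ r.support, ∃ p : X, m (Sum.inl p) ≠ 0 ∧ m (Sum.inr p) ≠ 0) :
    dualCon X r 0 := by
  classical
  rw [← MvPolynomial.support_sum_monomial_coeff r]
  refine Finset.sum_induction _ (fun x => dualCon X x 0) ?_ ?_ ?_
  · intro a b ha hb
    have := (dualCon X).add ha hb
    rwa [add_zero] at this
  · exact (dualCon X).refl 0
  · intro m hm
    obtain ⟨p, h1, h2⟩ := hr m hm
    exact dirty_monomial_con_zero m _ p h1 h2

lemma eq_zero_of_forall_evalS (q : DualPoly X) (h : ∀ s : X → Bool, evalS s q = 0) : q = 0 := by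
  obtain ⟨r, rfl⟩ := Quot.exists_rep q
  have hr : ∀ s : X → Bool, MvPolynomial.eval (vS s) r = 0 := fun s => h s
  have hdirty : ∀ m ∈ r.support, ∃ p : X, m (Sum.inl p) ≠ 0 ∧ m (Sum.inr p) ≠ 0 := by
    intro m hm
    by_contra hc
    push_neg at hc
    classical
    set s : X → Bool := fun p => decide (m (Sum.inl p) ≠ 0) with hs
    have h0 := hr s
    rw [MvPolynomial.eval_eq] at h0
    have hterm := (Finset.sum_eq_zero_iff.mp h0) m hm
    have hprod : (∏ i ∈ m.support, vS s i ^ m i) = 1 := by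
      apply Finset.prod_eq_one
      intro i hi
      have hi' : m i ≠ 0 := Finsupp.mem_support_iff.mp hi
      rcases i with p | p
      · simp [vS, hs, hi']
      · have : m (Sum.inl p) = 0 := by
          by_contra h'
          exact hi' (hc p h')
        simp [vS, hs, this]
    rw [hprod, mul_one] at hterm
    exact (MvPolynomial.mem_support_iff.mp hm) hterm
  have hcon := dirty_con_zero r hdirty
  have : (r : DualPoly X) = ((0 : MvPolynomial (X ⊕ X) ℕ) : DualPoly X) := (RingCon.eq _).mpr hcon
  simpa using this

end DP

section FormulaLemmas
variable {𝒱 : Vocab} {Vars A : Type} [DecidableEq Vars] [Fintype A] [DecidableEq A]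

omit [Fintype A] [DecidableEq A] in
lemma Lit.neg_neg (L : Lit 𝒱 A) : L.neg.neg = L := by
  cases L; simp [Lit.neg]

omit [Fintype A] [DecidableEq A] in
lemma satLit_neg (𝔄 : Struc 𝒱 A) (L : Lit 𝒱 A) : 𝔄.SatLit L.neg ↔ ¬ 𝔄.SatLit L := by
  obtain ⟨pos, R, args⟩ := L
  cases pos <;> simp [Struc.SatLit, Lit.neg]

lemma eval_hom_comm {K L : Type} [CommSemiring K] [CommSemiring L] (h : K →+* L)
    (π : Lit 𝒱 A → K) :
    ∀ (n : ℕ) (φ : Formula 𝒱 Vars), φ.size ≤ n → ∀ ν,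
      h (eval π φ ν) = eval (fun Lt => h (π Lt)) φ ν := by
  intro n
  induction n with
  | zero => intro φ hs; cases φ <;> simp [Formula.size] at hs
  | succ n ih =>
    intro φ hs ν
    cases φ with
    | rel R v => simp [_root_.eval]
    | nrel R v => simp [_root_.eval]
    | equal x y => simp only [_root_.eval]; split <;> simp
    | nequal x y => simp only [_root_.eval]; split <;> simp
    | and φ ψ =>
      simp only [Formula.size] at hs
      simp only [_root_.eval, map_mul]
      rw [ih φ (by omega), ih ψ (by omega)]
    | or φ ψ =>
      simp only [Formula.size] at hs
      simp only [_root_.eval, map_add]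
      rw [ih φ (by omega), ih ψ (by omega)]
    | all x φ =>
      simp only [Formula.size] at hs
      simp only [_root_.eval, map_prod]
      exact Finset.prod_congr rfl fun a _ => ih φ (by omega) _
    | ex x φ =>
      simp only [Formula.size] at hs
      simp only [_root_.eval, map_sum]
      exact Finset.sum_congr rfl fun a _ => ih φ (by omega) _
    | not φ =>
      simp only [Formula.size] at hs
      simp only [_root_.eval]
      exact ih φ.nnfNeg (le_trans (Formula.size_nnf_le φ).2 (by omega)) ν

omit [Fintype A] in
lemma sat_nnf (𝔄 : Struc 𝒱 A) (φ : Formula 𝒱 Vars) : ∀ ν,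
    (Sat 𝔄 φ.nnf ν ↔ Sat 𝔄 φ ν) ∧ (Sat 𝔄 φ.nnfNeg ν ↔ ¬ Sat 𝔄 φ ν) := by
  induction φ with
  | rel R v => intro ν; simp [Formula.nnf, Formula.nnfNeg, Sat]
  | nrel R v => intro ν; simp [Formula.nnf, Formula.nnfNeg, Sat, Classical.not_not]
  | equal x y => intro ν; simp [Formula.nnf, Formula.nnfNeg, Sat]
  | nequal x y => intro ν; simp [Formula.nnf, Formula.nnfNeg, Sat, Classical.not_not]
  | and φ ψ ihφ ihψ =>
    intro ν
    simp only [Formula.nnf, Formula.nnfNeg, Sat, (ihφ ν).1, (ihφ ν).2, (ihψ ν).1, (ihψ ν).2]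
    constructor <;> tauto
  | or φ ψ ihφ ihψ =>
    intro ν
    simp only [Formula.nnf, Formula.nnfNeg, Sat, (ihφ ν).1, (ihφ ν).2, (ihψ ν).1, (ihψ ν).2]
    constructor <;> tauto
  | all x φ ih =>
    intro ν
    simp only [Formula.nnf, Formula.nnfNeg, Sat]
    constructor
    · exact forall_congr' fun a => (ih _).1
    · rw [Classical.not_forall]
      exact exists_congr fun a => (ih _).2
  | ex x φ ih =>
    intro ν
    simp only [Formula.nnf, Formula.nnfNeg, Sat]
    constructor
    · exact exists_congr fun a => (ih _).1
    · rw [not_exists]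
      exact forall_congr' fun a => (ih _).2
  | not φ ih =>
    intro ν
    simp only [Formula.nnf, Formula.nnfNeg, Sat]
    exact ⟨(ih ν).2, (ih ν).1.trans (Iff.symm Classical.not_not)⟩

open Classical in
lemma eval_indicator_iff (𝔄 : Struc 𝒱 A) :
    ∀ (n : ℕ) (φ : Formula 𝒱 Vars), φ.size ≤ n → ∀ ν,
      (eval (fun L => if 𝔄.SatLit L then (1 : ℕ) else 0) φ ν ≠ 0 ↔ Sat 𝔄 φ ν) := by
  intro n
  induction n with
  | zero => intro φ hs; cases φ <;> simp [Formula.size] at hs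
  | succ n ih =>
    intro φ hs ν
    cases φ with
    | rel R v =>
      simp only [_root_.eval, Sat, Struc.SatLit]
      split <;> simp_all [Struc.SatLit]
    | nrel R v =>
      simp only [_root_.eval, Sat, Struc.SatLit]
      split <;> simp_all [Struc.SatLit]
    | equal x y => simp only [_root_.eval, Sat]; split <;> simp_all
    | nequal x y => simp only [_root_.eval, Sat]; split <;> simp_all
    | and φ ψ =>
      simp only [Formula.size] at hs
      simp only [_root_.eval, Sat, mul_ne_zero_iff]
      rw [ih φ (by omega), ih ψ (by omega)]
    | or φ ψ =>
      simp only [Formula.size] at hs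
      simp only [_root_.eval, Sat]
      rw [← ih φ (by omega) ν, ← ih ψ (by omega) ν]
      omega
    | all x φ =>
      simp only [Formula.size] at hs
      simp only [_root_.eval, Sat, Finset.prod_ne_zero_iff]
      exact ⟨fun h a => (ih φ (by omega) _).mp (h a (Finset.mem_univ a)),
        fun h a _ => (ih φ (by omega) _).mpr (h a)⟩
    | ex x φ =>
      simp only [Formula.size] at hs
      simp only [_root_.eval, Sat]
      constructor
      · intro h
        obtain ⟨a, _, ha⟩ := Finset.exists_ne_zero_of_sum_ne_zero h
        exact ⟨a, (ih φ (by omega) _).mp ha⟩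
      · rintro ⟨a, ha⟩ h0
        exact (ih φ (by omega) _).mpr ha ((Finset.sum_eq_zero_iff.mp h0) a (Finset.mem_univ a))
    | not φ =>
      simp only [Formula.size] at hs
      simp only [_root_.eval, Sat]
      rw [ih φ.nnfNeg (le_trans (Formula.size_nnf_le φ).2 (by omega)) ν]
      exact (sat_nnf 𝔄 φ ν).2

end FormulaLemmas

section Main
variable {𝒱 : Vocab} {A X : Type}

open Classical in
lemma hom_indicator (π : Lit 𝒱 A → DualPoly X) (hπ : ModelCompatible π)
    (𝔄 : Struc 𝒱 A) (s : X → Bool) (hcomp : Compatible π 𝔄)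
    (htok : ∀ (L : Lit 𝒱 A) (z : X), π L = tok (Sum.inl z) → (𝔄.SatLit L ↔ s z = true)) :
    ∀ L : Lit 𝒱 A, evalS s (π L) = if 𝔄.SatLit L then 1 else 0 := by
  intro L
  by_cases hpos : L.pos = true
  · rcases (hπ.1 L hpos) with ⟨z, h1, h2⟩ | ⟨h1, h2⟩ | ⟨h1, h2⟩
    · rw [h1, evalS_tok]
      have hiff := htok L z h1
      by_cases hsz : s z = true <;> by_cases hsat : 𝔄.SatLit L <;>
        simp [vS, hsz, hsat] at hiff ⊢ <;> tauto
    · have hneg : 𝔄.SatLit L.neg := hcomp _ h2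
      have hn : ¬ 𝔄.SatLit L := (satLit_neg 𝔄 L).mp hneg
      rw [h1, map_zero, if_neg hn]
    · have hs : 𝔄.SatLit L := hcomp _ h1
      rw [h1, map_one, if_pos hs]
  · have hpos' : L.neg.pos = true := by
      cases L; simp_all [Lit.neg]
    rcases (hπ.1 L.neg hpos') with ⟨z, h1, h2⟩ | ⟨h1, h2⟩ | ⟨h1, h2⟩ <;> rw [Lit.neg_neg] at h2
    · rw [h2, evalS_tok]
      have hiff := htok L.neg z h1
      rw [satLit_neg 𝔄 L] at hiff
      by_cases hsz : s z = true <;> by_cases hsat : 𝔄.SatLit L <;>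
        simp [vS, hsz, hsat] at hiff ⊢ <;> tauto
    · have hs : 𝔄.SatLit L := hcomp _ h2
      rw [h2, map_one, if_pos hs]
    · have hneg : 𝔄.SatLit L.neg := hcomp _ h1
      have hn : ¬ 𝔄.SatLit L := (satLit_neg 𝔄 L).mp hneg
      rw [h2, map_zero, if_neg hn]

open Classical in
lemma forward_struc (π : Lit 𝒱 A → DualPoly X) (hπ : ModelCompatible π) (s : X → Bool) :
    ∃ 𝔄 : Struc 𝒱 A, Compatible π 𝔄 ∧
      ∀ (L : Lit 𝒱 A) (z : X), π L = tok (Sum.inl z) → (𝔄.SatLit L ↔ s z = true) := by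
  refine ⟨fun R a => π ⟨true, R, a⟩ = 1 ∨ ∃ p : X, π ⟨true, R, a⟩ = tok (Sum.inl p) ∧ s p = true,
    ?_, ?_⟩
  · intro L hL1
    obtain ⟨pos, R, args⟩ := L
    cases pos
    · -- negative literal with value 1
      rcases hπ.1 ⟨true, R, args⟩ rfl with ⟨z, ha1, ha2⟩ | ⟨ha1, ha2⟩ | ⟨ha1, ha2⟩ <;>
        simp only [Lit.neg] at ha2
      · exact absurd (ha2.symm.trans hL1) (tok_ne_one _)
      · simp only [Struc.SatLit]
        rintro (h | ⟨p, hp, _⟩)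
        · exact dp_zero_ne_one (ha1.symm.trans h)
        · exact tok_ne_zero _ (hp.symm.trans ha1)
      · exact absurd (ha2.symm.trans hL1) dp_zero_ne_one
    · simp only [Struc.SatLit]
      exact Or.inl hL1
  · intro L z hLz
    have hpos : L.pos = true := by
      by_contra hneg
      obtain ⟨pos, R, args⟩ := L
      cases pos
      · rcases hπ.1 ⟨true, R, args⟩ rfl with ⟨z', ha1, ha2⟩ | ⟨ha1, ha2⟩ | ⟨ha1, ha2⟩ <;>
          simp only [Lit.neg] at ha2
        · exact tok_inl_ne_inr z z' (hLz.symm.trans ha2)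
        · exact tok_ne_one _ (hLz.symm.trans ha2)
        · exact tok_ne_zero _ (hLz.symm.trans ha2)
      · exact hneg rfl
    obtain ⟨pos, R, args⟩ := L
    cases pos
    · simp at hpos
    · simp only [Struc.SatLit]
      constructor
      · rintro (h | ⟨p, hp, hsp⟩)
        · exact absurd (hLz.symm.trans h) (tok_ne_one _)
        · have : z = p := tok_inl_inj (hLz.symm.trans hp)
          rwa [this]
      · intro hsz
        exact Or.inr ⟨z, hLz, hsz⟩

open Classical in
lemma backward_s (π : Lit 𝒱 A → DualPoly X) (hπ : ModelCompatible π) (𝔄 : Struc 𝒱 A) :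
    ∃ s : X → Bool, ∀ (L : Lit 𝒱 A) (z : X), π L = tok (Sum.inl z) → (𝔄.SatLit L ↔ s z = true) := by
  refine ⟨fun z => if ∃ L : Lit 𝒱 A, π L = tok (Sum.inl z) ∧ 𝔄.SatLit L then true else false, ?_⟩
  intro L z hLz
  show 𝔄.SatLit L ↔ (if ∃ L' : Lit 𝒱 A, π L' = tok (Sum.inl z) ∧ 𝔄.SatLit L' then true
    else false) = true
  by_cases h : ∃ L' : Lit 𝒱 A, π L' = tok (Sum.inl z) ∧ 𝔄.SatLit L'
  · rw [if_pos h]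
    obtain ⟨L', hL', hsat⟩ := h
    have hLL : L = L' := hπ.2 L L' z hLz hL'
    subst hLL
    simp [hsat]
  · rw [if_neg h]
    constructor
    · intro hsat; exact absurd ⟨L, hLz, hsat⟩ h
    · simp

end Main

/-- for a model-compatible interpretation `π` and a sentence `φ`,
`φ` is `Mod_π`-valid iff `π⟦¬φ⟧ = 0`. -/
theorem modPi_valid_iff {𝒱 : Vocab} {Vars A X : Type} [DecidableEq Vars]
    [Fintype A] [DecidableEq A] [Nonempty A]
    (π : Lit 𝒱 A → DualPoly X) (hπ : ModelCompatible π)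
    (φ : Formula 𝒱 Vars) (hφ : φ.FV = ∅) (ν : Vars → A) :
    (∀ 𝔄 : Struc 𝒱 A, Compatible π 𝔄 → Sat 𝔄 φ ν) ↔
      eval π (Formula.not φ) ν = 0 := by
  have hq : eval π (Formula.not φ) ν = eval π φ.nnfNeg ν := by simp [_root_.eval]
  rw [hq]
  constructor
  · intro H
    apply eq_zero_of_forall_evalS
    intro s
    obtain ⟨𝔄, hcomp, htok⟩ := forward_struc π hπ s
    have hkey := hom_indicator π hπ 𝔄 s hcomp htok
    have h1 : evalS s (eval π φ.nnfNeg ν) = eval (fun L => evalS s (π L)) φ.nnfNeg ν :=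
      eval_hom_comm (evalS s) π φ.nnfNeg.size φ.nnfNeg le_rfl ν
    rw [h1, funext hkey]
    by_contra hne
    exact ((sat_nnf 𝔄 φ ν).2.mp
      ((eval_indicator_iff 𝔄 φ.nnfNeg.size φ.nnfNeg le_rfl ν).mp hne)) (H 𝔄 hcomp)
  · intro h0 𝔄 hcomp
    obtain ⟨s, htok⟩ := backward_s π hπ 𝔄
    have hkey := hom_indicator π hπ 𝔄 s hcomp htok
    have h1 : evalS s (eval π φ.nnfNeg ν) = eval (fun L => evalS s (π L)) φ.nnfNeg ν :=
      eval_hom_comm (evalS s) π φ.nnfNeg.size φ.nnfNeg le_rfl ν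
    rw [h0, map_zero, funext hkey] at h1
    have hns : ¬ Sat 𝔄 φ.nnfNeg ν := fun hsat =>
      (eval_indicator_iff 𝔄 φ.nnfNeg.size φ.nnfNeg le_rfl ν).mpr hsat h1.symm
    by_contra hφn
    exact hns ((sat_nnf 𝔄 φ ν).2.mpr hφn)
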